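/- Let H_0 = (S,T;F_0) be a simple bigraph with bipartite complement G_0, r_S the rank function of a matroid on S, p_T a positively intersecting supermodular set-function on T, and m_V = (m_S, m_T) a degree-specification with m̃_S(S) = m̃_T(T) = γ satisfying Condition (★). Then the set-function p_1 is positively ST-crossing supermodular. -/
import Mathlib


open Finset

variable {α : Type*} [DecidableEq α]

/-- The number of edges of the bigraph with edge set `E` connecting `X ⊆ S` and `Y ⊆ T`. -/
def edgesBetween (E : Finset (α × α)) (X Y : Finset α) : ℕ :=
  (E.filter (fun e => e.1 ∈ X ∧ e.2 ∈ Y)).card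

/-- The set of neighbours (in `S`) of a subset `Z ⊆ T` in the bigraph with edge set `E`. -/
def nbrs (E : Finset (α × α)) (Z : Finset α) : Finset α :=
  (E.filter (fun e => e.2 ∈ Z)).image Prod.fst

/-- The degree of a node `v ∈ S` in the bigraph with edge set `E`. -/
def degS (E : Finset (α × α)) (v : α) : ℕ := (E.filter (fun e => e.1 = v)).card

/-- The degree of a node `v ∈ T` in the bigraph with edge set `E`. -/
def degT (E : Finset (α × α)) (v : α) : ℕ := (E.filter (fun e => e.2 = v)).card

/-- `r` is the rank function of a matroid on the ground set `S`. -/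
def IsRankFn (S : Finset α) (r : Finset α → ℕ) : Prop :=
  (∀ X, X ⊆ S → r X ≤ X.card) ∧
  (∀ X Y, X ⊆ Y → Y ⊆ S → r X ≤ r Y) ∧
  (∀ X Y, X ⊆ S → Y ⊆ S → r (X ∪ Y) + r (X ∩ Y) ≤ r X + r Y)

/-- `V' ∈ ℋ₀`: no arc of the orientation of `H₀` (from `S` to `T`) enters `V'`. -/
def memH₀ (F₀ : Finset (α × α)) (V' : Finset α) : Prop :=
  ∀ e ∈ F₀, e.2 ∈ V' → e.1 ∈ V'

instance (F₀ : Finset (α × α)) (V' : Finset α) : Decidable (memH₀ F₀ V') := by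
  unfold memH₀; infer_instance

/-- The set-function `p₀` of the paper:
`p₀(V') = max{p_T({y}) − r_S(X), m_T(y) − |X| + d_{H₀}(y)}` if `V' = X ∪ {y} ∈ ℋ₀`
with `X ⊆ S`, `y ∈ T`; `p₀(V') = p_T(Y) − r_S(X)` if `V' = X ∪ Y ∈ ℋ₀` with `X ⊆ S`,
`Y ⊆ T`, `|Y| ≥ 2`; and `p₀(V') = 0` otherwise. -/
def p₀ (S T : Finset α) (F₀ : Finset (α × α)) (rS : Finset α → ℕ)
    (pT : Finset α → ℤ) (m : α → ℤ) (V' : Finset α) : ℤ :=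
  if V' ⊆ S ∪ T ∧ memH₀ F₀ V' then
    if (V' ∩ T).card = 1 then
      max (pT (V' ∩ T) - (rS (V' ∩ S) : ℤ))
        ((∑ y ∈ V' ∩ T, m y) - ((V' ∩ S).card : ℤ) + ∑ y ∈ V' ∩ T, (degT F₀ y : ℤ))
    else if 2 ≤ (V' ∩ T).card then pT (V' ∩ T) - (rS (V' ∩ S) : ℤ)
    else 0
  else 0

/-- `V_s = {v ∈ V − s : sv ∉ F₀}`. -/
def Vs (S T : Finset α) (F₀ : Finset (α × α)) (s : α) : Finset α :=
  ((S ∪ T).erase s).filter (fun v => (s, v) ∉ F₀)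

/-- The set-function `p₁` of the paper: `p₁(V_s) = m_S(s)` for `s ∈ S`
(such an `s` is unique when it exists), and `p₁(V') = p₀(V')` otherwise. -/
def p₁ (S T : Finset α) (F₀ : Finset (α × α)) (rS : Finset α → ℕ)
    (pT : Finset α → ℤ) (m : α → ℤ) (V' : Finset α) : ℤ :=
  if ∃ s ∈ S, V' = Vs S T F₀ s then
    ∑ s ∈ S.filter (fun s => V' = Vs S T F₀ s), m s
  else p₀ S T F₀ rS pT m V'

/-- Condition (★) of the paper: for every `Y ⊆ T`, `X ⊆ S` and every subpartition
`𝒯 = {T₁, …, T_q}` of `T − Y` into nonempty sets,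
`m̃(X) + m̃(Y) − d_{G₀}(X,Y) + ∑ᵢ (p_T(Tᵢ) − r_S(X ∪ Γ_{H₀}(Tᵢ))) ≤ γ`,
where `G₀ = (S ×ˢ T) \ F₀` is the bipartite complement of `H₀`. -/
def StarCond (S T : Finset α) (F₀ : Finset (α × α)) (rS : Finset α → ℕ)
    (pT : Finset α → ℤ) (m : α → ℤ) (γ : ℤ) : Prop :=
  ∀ X ⊆ S, ∀ Y ⊆ T, ∀ 𝒯 : Finset (Finset α),
    (∀ Ti ∈ 𝒯, Ti.Nonempty ∧ Ti ⊆ T \ Y) →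
    (∀ T₁ ∈ 𝒯, ∀ T₂ ∈ 𝒯, T₁ ≠ T₂ → Disjoint T₁ T₂) →
    (∑ v ∈ X, m v) + (∑ v ∈ Y, m v)
        - (edgesBetween ((S ×ˢ T) \ F₀) X Y : ℤ)
        + ∑ Ti ∈ 𝒯, (pT Ti - (rS (X ∪ nbrs F₀ Ti) : ℤ)) ≤ γ

private lemma memH₀_inter {F₀ : Finset (α × α)} {X Y : Finset α}
    (hX : memH₀ F₀ X) (hY : memH₀ F₀ Y) : memH₀ F₀ (X ∩ Y) := by
  intro e he h2
  rw [mem_inter] at h2 ⊢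
  exact ⟨hX e he h2.1, hY e he h2.2⟩

private lemma memH₀_union {F₀ : Finset (α × α)} {X Y : Finset α}
    (hX : memH₀ F₀ X) (hY : memH₀ F₀ Y) : memH₀ F₀ (X ∪ Y) := by
  intro e he h2
  rw [mem_union] at h2 ⊢
  exact h2.imp (hX e he) (hY e he)

private lemma rank_union_le_card {S : Finset α} {rS : Finset α → ℕ} (hrS : IsRankFn S rS)
    {A B : Finset α} (hA : A ⊆ S) (hB : B ⊆ S) :
    (rS (A ∪ B) : ℤ) ≤ (rS A : ℤ) + ((B \ A).card : ℤ) := by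
  have h1 := hrS.2.2 A (B \ A) hA (sdiff_subset.trans hB)
  have h2 := hrS.1 (B \ A) (sdiff_subset.trans hB)
  rw [union_sdiff_self_eq_union] at h1
  have : rS (A ∪ B) ≤ rS A + (B \ A).card := by omega
  exact_mod_cast this

private lemma Vs_subset (S T : Finset α) (F₀ : Finset (α × α)) (s : α) :
    Vs S T F₀ s ⊆ S ∪ T :=
  (filter_subset _ _).trans (erase_subset _ _)

private lemma Vs_inter_S {S T : Finset α} {F₀ : Finset (α × α)}
    (hST : Disjoint S T) (hF₀ : F₀ ⊆ S ×ˢ T) (s : α) :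
    Vs S T F₀ s ∩ S = S.erase s := by
  ext v
  simp only [Vs, mem_inter, mem_filter, mem_erase, mem_union]
  constructor
  · rintro ⟨⟨⟨hne, _⟩, _⟩, hv⟩; exact ⟨hne, hv⟩
  · rintro ⟨hne, hv⟩
    refine ⟨⟨⟨hne, Or.inl hv⟩, fun hmem => ?_⟩, hv⟩
    have := hF₀ hmem
    rw [mem_product] at this
    exact disjoint_left.mp hST hv this.2

private lemma Vs_inter_T {S T : Finset α} {F₀ : Finset (α × α)}
    (hST : Disjoint S T) {s : α} (hs : s ∈ S) :
    Vs S T F₀ s ∩ T = T.filter (fun t => (s, t) ∉ F₀) := by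
  ext v
  simp only [Vs, mem_inter, mem_filter, mem_erase, mem_union]
  constructor
  · rintro ⟨⟨_, hnf⟩, hv⟩; exact ⟨hv, hnf⟩
  · rintro ⟨hv, hnf⟩
    exact ⟨⟨⟨fun h => disjoint_left.mp hST hs (h ▸ hv), Or.inr hv⟩, hnf⟩, hv⟩

private lemma memH₀_Vs {S T : Finset α} {F₀ : Finset (α × α)}
    (hST : Disjoint S T) (hF₀ : F₀ ⊆ S ×ˢ T) (s : α) : memH₀ F₀ (Vs S T F₀ s) := by
  intro e he h2
  have hp := hF₀ he
  rw [mem_product] at hp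
  simp only [Vs, mem_filter, mem_erase, mem_union] at h2 ⊢
  refine ⟨⟨fun h => ?_, Or.inl hp.1⟩, fun h => ?_⟩
  · exact h2.2 (by rw [← h, Prod.mk.eta]; exact he)
  · have := hF₀ h
    rw [mem_product] at this
    exact disjoint_left.mp hST hp.1 this.2

private lemma edgesBetween_empty_right (E : Finset (α × α)) (X : Finset α) :
    edgesBetween E X ∅ = 0 := by
  simp [edgesBetween]

private lemma p0_Vs_le {S T : Finset α} {F₀ : Finset (α × α)} {rS : Finset α → ℕ}
    {pT : Finset α → ℤ} {m : α → ℤ} {γ : ℤ}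
    (hST : Disjoint S T) (hF₀ : F₀ ⊆ S ×ˢ T)
    (hγS : ∑ v ∈ S, m v = γ)
    (hstar : StarCond S T F₀ rS pT m γ) {s : α} (hs : s ∈ S) :
    p₀ S T F₀ rS pT m (Vs S T F₀ s) ≤ m s := by
  set W := Vs S T F₀ s with hW
  have hWS : W ∩ S = S.erase s := Vs_inter_S hST hF₀ s
  have hWT : W ∩ T = T.filter (fun t => (s, t) ∉ F₀) := Vs_inter_T hST hs
  have hsum : ∑ v ∈ S.erase s, m v = γ - m s := by
    have h := Finset.sum_erase_add S m hs
    rw [hγS] at h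
    linarith
  have hnb : nbrs F₀ (W ∩ T) ⊆ S.erase s := by
    intro u hu
    simp only [nbrs, mem_image, mem_filter] at hu
    obtain ⟨e, ⟨heF, heT⟩, rfl⟩ := hu
    have hp := hF₀ heF
    rw [mem_product] at hp
    rw [hWT, mem_filter] at heT
    refine mem_erase.mpr ⟨fun h => ?_, hp.1⟩
    exact heT.2 (by rw [← h, Prod.mk.eta]; exact heF)
  have hb : ∀ 𝒯 : Finset (Finset α), (∀ Ti ∈ 𝒯, Ti.Nonempty ∧ Ti ⊆ T \ ∅) →
      (∀ T₁ ∈ 𝒯, ∀ T₂ ∈ 𝒯, T₁ ≠ T₂ → Disjoint T₁ T₂) →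
      (γ - m s) + ∑ Ti ∈ 𝒯, (pT Ti - (rS ((S.erase s) ∪ nbrs F₀ Ti) : ℤ)) ≤ γ := by
    intro 𝒯 h1 h2
    have h := hstar (S.erase s) (erase_subset _ _) ∅ (empty_subset T) 𝒯 h1 h2
    rw [sum_empty, edgesBetween_empty_right, hsum] at h
    push_cast at h
    linarith
  have hb1 : (W ∩ T).Nonempty → pT (W ∩ T) - (rS (S.erase s) : ℤ) ≤ m s := by
    intro hne
    have h := hb {W ∩ T} ?_ ?_
    · rw [sum_singleton, union_eq_left.mpr hnb] at h
      linarith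
    · intro Ti hTi
      rw [mem_singleton] at hTi
      subst hTi
      exact ⟨hne, by rw [sdiff_empty]; exact inter_subset_right⟩
    · intro T₁ h1 T₂ h2 hne'
      rw [mem_singleton] at h1 h2
      exact absurd (h1.trans h2.symm) hne'
  have h0 : 0 ≤ m s := by
    have h := hb ∅ (by simp) (by simp)
    rw [sum_empty] at h
    linarith
  have ha : (W ∩ T).card = 1 →
      (∑ y ∈ W ∩ T, m y) - ((W ∩ S).card : ℤ) + ∑ y ∈ W ∩ T, (degT F₀ y : ℤ) ≤ m s := by
    intro hc
    obtain ⟨y, hy⟩ := card_eq_one.mp hc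
    have hyW : y ∈ W ∩ T := hy ▸ mem_singleton_self y
    rw [hWT, mem_filter] at hyW
    obtain ⟨hyT, hsy⟩ := hyW
    have hE : edgesBetween ((S ×ˢ T) \ F₀) (S.erase s) {y} + degT F₀ y = (S.erase s).card := by
      have h1 : ((S ×ˢ T) \ F₀).filter (fun e => e.1 ∈ S.erase s ∧ e.2 ∈ ({y} : Finset α))
          = ((S.erase s) ×ˢ {y}) \ F₀ := by
        ext e
        simp only [mem_filter, mem_sdiff, mem_product, mem_erase, mem_singleton]
        constructor
        · rintro ⟨⟨_, hnf⟩, h1, h2⟩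
          exact ⟨⟨h1, h2⟩, hnf⟩
        · rintro ⟨⟨⟨hne, h1⟩, h2⟩, hnf⟩
          exact ⟨⟨⟨h1, by rw [h2]; exact hyT⟩, hnf⟩, ⟨hne, h1⟩, h2⟩
      have h2 : F₀.filter (fun e => e.2 = y) = ((S.erase s) ×ˢ {y}) ∩ F₀ := by
        ext e
        simp only [mem_filter, mem_inter, mem_product, mem_erase, mem_singleton]
        constructor
        · rintro ⟨hf, h2⟩
          have hp := hF₀ hf
          rw [mem_product] at hp
          refine ⟨⟨⟨fun h => ?_, hp.1⟩, h2⟩, hf⟩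
          exact hsy (by rw [← h2, ← h, Prod.mk.eta]; exact hf)
        · rintro ⟨⟨_, h2⟩, hf⟩
          exact ⟨hf, h2⟩
      unfold edgesBetween degT
      rw [h1, h2, card_sdiff_add_card_inter, card_product, card_singleton, mul_one]
    have hstar2 := hstar (S.erase s) (erase_subset _ _) {y} (singleton_subset_iff.mpr hyT) ∅
      (by simp) (by simp)
    rw [sum_empty, sum_singleton, hsum] at hstar2
    have hE' : (edgesBetween ((S ×ˢ T) \ F₀) (S.erase s) {y} : ℤ) + (degT F₀ y : ℤ)
        = ((S.erase s).card : ℤ) := by exact_mod_cast hE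
    rw [hy, hWS, sum_singleton, sum_singleton]
    linarith
  unfold p₀
  rw [if_pos ⟨Vs_subset S T F₀ s, memH₀_Vs hST hF₀ s⟩]
  by_cases h1 : (W ∩ T).card = 1
  · rw [if_pos h1]
    refine max_le ?_ (ha h1)
    rw [hWS]
    exact hb1 (card_pos.mp (by omega))
  · rw [if_neg h1]
    by_cases h2 : 2 ≤ (W ∩ T).card
    · rw [if_pos h2, hWS]
      exact hb1 (card_pos.mp (by omega))
    · rw [if_neg h2]
      exact h0

private lemma p1_ge_p0 {S T : Finset α} {F₀ : Finset (α × α)} {rS : Finset α → ℕ}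
    {pT : Finset α → ℤ} {m : α → ℤ} {γ : ℤ}
    (hST : Disjoint S T) (hF₀ : F₀ ⊆ S ×ˢ T)
    (hγS : ∑ v ∈ S, m v = γ)
    (hstar : StarCond S T F₀ rS pT m γ) (V' : Finset α) :
    p₀ S T F₀ rS pT m V' ≤ p₁ S T F₀ rS pT m V' := by
  unfold p₁
  by_cases h : ∃ s ∈ S, V' = Vs S T F₀ s
  · rw [if_pos h]
    obtain ⟨s, hs, rfl⟩ := h
    have hf : S.filter (fun s' => Vs S T F₀ s = Vs S T F₀ s') = {s} := by
      ext s'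
      simp only [mem_filter, mem_singleton]
      constructor
      · rintro ⟨hs', heq⟩
        by_contra hne
        have h1 : Vs S T F₀ s ∩ S = Vs S T F₀ s' ∩ S := by rw [heq]
        rw [Vs_inter_S hST hF₀ s, Vs_inter_S hST hF₀ s'] at h1
        have h2 : s ∈ S.erase s' := mem_erase.mpr ⟨fun h => hne h.symm, hs⟩
        rw [← h1] at h2
        exact (mem_erase.mp h2).1 rfl
      · rintro rfl
        exact ⟨hs, rfl⟩
    rw [hf, sum_singleton]
    exact p0_Vs_le hST hF₀ hγS hstar hs
  · rw [if_neg h]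

private lemma p₀_pos_cond {S T : Finset α} {F₀ : Finset (α × α)} {rS : Finset α → ℕ}
    {pT : Finset α → ℤ} {m : α → ℤ} {V' : Finset α}
    (h : 0 < p₀ S T F₀ rS pT m V') : V' ⊆ S ∪ T ∧ memH₀ F₀ V' := by
  by_contra hc
  unfold p₀ at h
  rw [if_neg hc] at h
  exact lt_irrefl 0 h

private lemma p₀_eq_one {S T : Finset α} {F₀ : Finset (α × α)} {rS : Finset α → ℕ}
    {pT : Finset α → ℤ} {m : α → ℤ} {V' : Finset α}
    (hc : V' ⊆ S ∪ T ∧ memH₀ F₀ V') (h1 : (V' ∩ T).card = 1) :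
    p₀ S T F₀ rS pT m V' = max (pT (V' ∩ T) - (rS (V' ∩ S) : ℤ))
      ((∑ y ∈ V' ∩ T, m y) + (∑ y ∈ V' ∩ T, (degT F₀ y : ℤ)) - ((V' ∩ S).card : ℤ)) := by
  unfold p₀
  rw [if_pos hc, if_pos h1, sub_add_eq_add_sub]

private lemma p₀_eq_big {S T : Finset α} {F₀ : Finset (α × α)} {rS : Finset α → ℕ}
    {pT : Finset α → ℤ} {m : α → ℤ} {V' : Finset α}
    (hc : V' ⊆ S ∪ T ∧ memH₀ F₀ V') (h2 : 2 ≤ (V' ∩ T).card) :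
    p₀ S T F₀ rS pT m V' = pT (V' ∩ T) - (rS (V' ∩ S) : ℤ) := by
  unfold p₀
  rw [if_pos hc, if_neg (by omega), if_pos h2]

private lemma max_sup_helper {u w rA rB rI rU cA cB cI cU : ℤ}
    (h1 : rU + rI ≤ rA + rB) (h2 : rU + cI ≤ rA + cB) (h3 : rU + cI ≤ rB + cA)
    (h4 : cI + cU = cA + cB) :
    max (u - rA) (w - cA) + max (u - rB) (w - cB) ≤
      max (u - rI) (w - cI) + max (u - rU) (w - cU) := by
  have lI1 := le_max_left (u - rI) (w - cI)
  have lI2 := le_max_right (u - rI) (w - cI)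
  have lU1 := le_max_left (u - rU) (w - cU)
  have lU2 := le_max_right (u - rU) (w - cU)
  rcases max_choice (u - rA) (w - cA) with h | h <;> rw [h] <;>
    rcases max_choice (u - rB) (w - cB) with h' | h' <;> rw [h'] <;> linarith

private lemma max_sup_helper2 {u v w rA rB rI rU cA cI : ℤ}
    (h1 : rU + rI ≤ rA + rB) (h2 : rU + cI ≤ rB + cA) :
    max (u - rA) (w - cA) + (v - rB) ≤ max (u - rI) (w - cI) + (v - rU) := by
  have lI1 := le_max_left (u - rI) (w - cI)
  have lI2 := le_max_right (u - rI) (w - cI)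
  rcases max_choice (u - rA) (w - cA) with h | h <;> rw [h] <;> linarith

private lemma p0_supermod {S T : Finset α} {F₀ : Finset (α × α)} {rS : Finset α → ℕ}
    {pT : Finset α → ℤ} {m : α → ℤ}
    (hrS : IsRankFn S rS)
    (hpT : ∀ X Y : Finset α, X ⊆ T → Y ⊆ T → (X ∩ Y).Nonempty →
      0 < pT X → 0 < pT Y → pT X + pT Y ≤ pT (X ∩ Y) + pT (X ∪ Y))
    {X Y : Finset α} (hX : X ⊆ S ∪ T) (hY : Y ⊆ S ∪ T)
    (hmX : memH₀ F₀ X) (hmY : memH₀ F₀ Y)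
    (hne : (X ∩ Y ∩ T).Nonempty)
    (hpX : 0 < p₀ S T F₀ rS pT m X) (hpY : 0 < p₀ S T F₀ rS pT m Y) :
    p₀ S T F₀ rS pT m X + p₀ S T F₀ rS pT m Y ≤
      p₀ S T F₀ rS pT m (X ∩ Y) + p₀ S T F₀ rS pT m (X ∪ Y) := by
  have cX : X ⊆ S ∪ T ∧ memH₀ F₀ X := ⟨hX, hmX⟩
  have cY : Y ⊆ S ∪ T ∧ memH₀ F₀ Y := ⟨hY, hmY⟩
  have cI : X ∩ Y ⊆ S ∪ T ∧ memH₀ F₀ (X ∩ Y) :=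
    ⟨inter_subset_left.trans hX, memH₀_inter hmX hmY⟩
  have cU : X ∪ Y ⊆ S ∪ T ∧ memH₀ F₀ (X ∪ Y) :=
    ⟨union_subset hX hY, memH₀_union hmX hmY⟩
  have hiS : X ∩ Y ∩ S = (X ∩ S) ∩ (Y ∩ S) := by ext a; simp only [mem_inter]; tauto
  have hiT : X ∩ Y ∩ T = (X ∩ T) ∩ (Y ∩ T) := by ext a; simp only [mem_inter]; tauto
  have huS : (X ∪ Y) ∩ S = (X ∩ S) ∪ (Y ∩ S) := union_inter_distrib_right X Y S
  have huT : (X ∪ Y) ∩ T = (X ∩ T) ∪ (Y ∩ T) := union_inter_distrib_right X Y T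
  have hPQ : ((X ∩ T) ∩ (Y ∩ T)).Nonempty := hiT ▸ hne
  obtain ⟨y, hy⟩ := hPQ
  have hyP : y ∈ X ∩ T := (mem_inter.mp hy).1
  have hyQ : y ∈ Y ∩ T := (mem_inter.mp hy).2
  have hPQne : ((X ∩ T) ∩ (Y ∩ T)).Nonempty := ⟨y, hy⟩
  have hPQ1 : 1 ≤ ((X ∩ T) ∩ (Y ∩ T)).card := card_pos.mpr hPQne
  have hP1 : 1 ≤ (X ∩ T).card := card_pos.mpr ⟨y, hyP⟩
  have hQ1 : 1 ≤ (Y ∩ T).card := card_pos.mpr ⟨y, hyQ⟩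
  -- rank and cardinality facts
  have hAS : X ∩ S ⊆ S := inter_subset_right
  have hBS : Y ∩ S ⊆ S := inter_subset_right
  have rsub : (rS ((X ∩ S) ∪ (Y ∩ S)) : ℤ) + (rS ((X ∩ S) ∩ (Y ∩ S)) : ℤ)
      ≤ (rS (X ∩ S) : ℤ) + (rS (Y ∩ S) : ℤ) := by
    exact_mod_cast hrS.2.2 (X ∩ S) (Y ∩ S) hAS hBS
  have rcAB : (rS ((X ∩ S) ∪ (Y ∩ S)) : ℤ) ≤ (rS (X ∩ S) : ℤ) + (((Y ∩ S) \ (X ∩ S)).card : ℤ) :=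
    rank_union_le_card hrS hAS hBS
  have rcBA : (rS ((X ∩ S) ∪ (Y ∩ S)) : ℤ) ≤ (rS (Y ∩ S) : ℤ) + (((X ∩ S) \ (Y ∩ S)).card : ℤ) := by
    rw [union_comm]
    exact rank_union_le_card hrS hBS hAS
  have cardIU : (((X ∩ S) ∩ (Y ∩ S)).card : ℤ) + (((X ∩ S) ∪ (Y ∩ S)).card : ℤ)
      = ((X ∩ S).card : ℤ) + ((Y ∩ S).card : ℤ) := by
    exact_mod_cast card_inter_add_card_union (X ∩ S) (Y ∩ S)
  have cAB' : ((((Y ∩ S) \ (X ∩ S)).card : ℤ)) + (((X ∩ S) ∩ (Y ∩ S)).card : ℤ)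
      = ((Y ∩ S).card : ℤ) := by
    have h := card_sdiff_add_card_inter (Y ∩ S) (X ∩ S)
    rw [inter_comm (Y ∩ S) (X ∩ S)] at h
    exact_mod_cast h
  have cBA' : ((((X ∩ S) \ (Y ∩ S)).card : ℤ)) + (((X ∩ S) ∩ (Y ∩ S)).card : ℤ)
      = ((X ∩ S).card : ℤ) := by
    exact_mod_cast card_sdiff_add_card_inter (X ∩ S) (Y ∩ S)
  have h1 : (rS ((X ∩ S) ∪ (Y ∩ S)) : ℤ) + (rS ((X ∩ S) ∩ (Y ∩ S)) : ℤ)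
      ≤ (rS (X ∩ S) : ℤ) + (rS (Y ∩ S) : ℤ) := rsub
  have h2 : (rS ((X ∩ S) ∪ (Y ∩ S)) : ℤ) + (((X ∩ S) ∩ (Y ∩ S)).card : ℤ)
      ≤ (rS (X ∩ S) : ℤ) + ((Y ∩ S).card : ℤ) := by linarith
  have h3 : (rS ((X ∩ S) ∪ (Y ∩ S)) : ℤ) + (((X ∩ S) ∩ (Y ∩ S)).card : ℤ)
      ≤ (rS (Y ∩ S) : ℤ) + ((X ∩ S).card : ℤ) := by linarith
  rcases (by omega : (X ∩ T).card = 1 ∨ 2 ≤ (X ∩ T).card) with hPc | hPc <;>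
    rcases (by omega : (Y ∩ T).card = 1 ∨ 2 ≤ (Y ∩ T).card) with hQc | hQc
  · -- (1,1)
    have hI1 : (X ∩ T) ∩ (Y ∩ T) = X ∩ T :=
      eq_of_subset_of_card_le inter_subset_left (by omega)
    have hI2 : (X ∩ T) ∩ (Y ∩ T) = Y ∩ T :=
      eq_of_subset_of_card_le inter_subset_right (by omega)
    have hPQe : X ∩ T = Y ∩ T := hI1.symm.trans hI2
    have hIc : (X ∩ Y ∩ T).card = 1 := by rw [hiT, hI1]; exact hPc
    have hUc : ((X ∪ Y) ∩ T).card = 1 := by rw [huT, ← hPQe, union_self]; exact hPc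
    rw [p₀_eq_one cX hPc, p₀_eq_one cY hQc, p₀_eq_one cI hIc, p₀_eq_one cU hUc]
    rw [hiT, hiS, huT, huS, hI1, show (X ∩ T) ∪ (Y ∩ T) = X ∩ T by rw [← hPQe, union_self],
      ← hPQe]
    exact max_sup_helper h1 h2 h3 cardIU
  · -- (1, ≥2)
    have hI1 : (X ∩ T) ∩ (Y ∩ T) = X ∩ T :=
      eq_of_subset_of_card_le inter_subset_left (by omega)
    have hPsub : X ∩ T ⊆ Y ∩ T := by rw [← hI1]; exact inter_subset_right
    have hU : (X ∩ T) ∪ (Y ∩ T) = Y ∩ T := union_eq_right.mpr hPsub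
    have hIc : (X ∩ Y ∩ T).card = 1 := by rw [hiT, hI1]; exact hPc
    have hUc : 2 ≤ ((X ∪ Y) ∩ T).card := by rw [huT, hU]; exact hQc
    rw [p₀_eq_one cX hPc, p₀_eq_big cY hQc, p₀_eq_one cI hIc, p₀_eq_big cU hUc]
    rw [hiT, hiS, huT, huS, hI1, hU]
    exact max_sup_helper2 h1 (by linarith)
  · -- (≥2, 1)
    have hI2 : (X ∩ T) ∩ (Y ∩ T) = Y ∩ T :=
      eq_of_subset_of_card_le inter_subset_right (by omega)
    have hQsub : Y ∩ T ⊆ X ∩ T := by rw [← hI2]; exact inter_subset_left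
    have hU : (X ∩ T) ∪ (Y ∩ T) = X ∩ T := union_eq_left.mpr hQsub
    have hIc : (X ∩ Y ∩ T).card = 1 := by rw [hiT, hI2]; exact hQc
    have hUc : 2 ≤ ((X ∪ Y) ∩ T).card := by rw [huT, hU]; exact hPc
    rw [p₀_eq_big cX hPc, p₀_eq_one cY hQc, p₀_eq_one cI hIc, p₀_eq_big cU hUc]
    rw [hiT, hiS, huT, huS, hI2, hU]
    rw [add_comm (pT (X ∩ T) - (rS (X ∩ S) : ℤ))]
    exact max_sup_helper2 (by linarith) (by linarith)
  · -- (≥2, ≥2)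
    have hbX : 0 < pT (X ∩ T) - (rS (X ∩ S) : ℤ) := by
      rwa [p₀_eq_big cX hPc] at hpX
    have hbY : 0 < pT (Y ∩ T) - (rS (Y ∩ S) : ℤ) := by
      rwa [p₀_eq_big cY hQc] at hpY
    have posP : 0 < pT (X ∩ T) := by
      have := Int.natCast_nonneg (rS (X ∩ S)); linarith
    have posQ : 0 < pT (Y ∩ T) := by
      have := Int.natCast_nonneg (rS (Y ∩ S)); linarith
    have hPT : pT (X ∩ T) + pT (Y ∩ T) ≤
        pT ((X ∩ T) ∩ (Y ∩ T)) + pT ((X ∩ T) ∪ (Y ∩ T)) :=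
      hpT _ _ inter_subset_right inter_subset_right hPQne posP posQ
    have hUc : 2 ≤ ((X ∪ Y) ∩ T).card := by
      rw [huT]
      exact le_trans hQc (card_le_card subset_union_right)
    have hIle : pT ((X ∩ T) ∩ (Y ∩ T)) - (rS ((X ∩ S) ∩ (Y ∩ S)) : ℤ)
        ≤ p₀ S T F₀ rS pT m (X ∩ Y) := by
      unfold p₀
      rw [if_pos cI, hiT, hiS]
      split_ifs with ha hb
      · exact le_max_left _ _
      · exact le_refl _
      · omega
    rw [p₀_eq_big cX hPc, p₀_eq_big cY hQc, p₀_eq_big cU hUc, huT, huS]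
    linarith

private lemma not_Vs_form {S T : Finset α} {F₀ : Finset (α × α)} {rS : Finset α → ℕ}
    {pT : Finset α → ℤ} {m : α → ℤ}
    (hST : Disjoint S T) (hF₀ : F₀ ⊆ S ×ˢ T)
    {X Y : Finset α} (hXY : ¬ X ⊆ Y) (hYX : ¬ Y ⊆ X)
    (hneS : (S \ (X ∪ Y)).Nonempty)
    (hpY : 0 < p₁ S T F₀ rS pT m Y) :
    ¬ ∃ s ∈ S, X = Vs S T F₀ s := by
  rintro ⟨s, hs, rfl⟩
  -- the unique element of S outside X is s
  have hsX : s ∉ Vs S T F₀ s := by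
    simp [Vs]
  have hS_sub : ∀ u ∈ S, u ≠ s → u ∈ Vs S T F₀ s := by
    intro u hu hne
    refine mem_filter.mpr ⟨mem_erase.mpr ⟨hne, mem_union_left T hu⟩, fun hmem => ?_⟩
    have := hF₀ hmem
    rw [mem_product] at this
    exact disjoint_left.mp hST hu this.2
  obtain ⟨u, hu⟩ := hneS
  rw [mem_sdiff, mem_union] at hu
  have hus : u = s := by
    by_contra hne
    exact hu.2 (Or.inl (hS_sub u hu.1 hne))
  subst hus
  have hsY : u ∉ Y := fun h => hu.2 (Or.inr h)
  by_cases hY : ∃ s' ∈ S, Y = Vs S T F₀ s'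
  · obtain ⟨s', hs', rfl⟩ := hY
    by_cases hss : s' = u
    · subst hss
      exact hYX (subset_refl _)
    · refine hsY (mem_filter.mpr ⟨mem_erase.mpr ⟨fun h => hss (h.symm), mem_union_left T hu.1⟩,
        fun hmem => ?_⟩)
      have := hF₀ hmem
      rw [mem_product] at this
      exact disjoint_left.mp hST hu.1 this.2
  · rw [p₁, if_neg hY] at hpY
    have hcY := p₀_pos_cond hpY
    refine hYX fun v hv => ?_
    have hvST : v ∈ S ∪ T := hcY.1 hv
    have hvne : v ≠ u := fun h => hsY (h ▸ hv)
    refine mem_filter.mpr ⟨mem_erase.mpr ⟨hvne, hvST⟩, fun hmem => ?_⟩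
    exact hsY (hcY.2 (u, v) hmem hv)

/-- **Claim 6 of the paper.** Under Condition (★), the set-function `p₁` is positively
`ST`-crossing supermodular: the supermodular inequality holds for any two non-comparable
subsets `X, Y` of `V = S ∪ T` with `X ∩ Y ∩ T ≠ ∅`, `S − (X ∪ Y) ≠ ∅`,
`p₁(X) > 0` and `p₁(Y) > 0`. -/
theorem p₁_positively_ST_crossing_supermodular
    (S T : Finset α) (hST : Disjoint S T) (hS : S.Nonempty) (hT : T.Nonempty)
    (F₀ : Finset (α × α)) (hF₀ : F₀ ⊆ S ×ˢ T)
    (rS : Finset α → ℕ) (hrS : IsRankFn S rS)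
    (pT : Finset α → ℤ)
    -- `p_T` is positively intersecting supermodular on `T`
    (hpT : ∀ X Y : Finset α, X ⊆ T → Y ⊆ T → (X ∩ Y).Nonempty →
      0 < pT X → 0 < pT Y → pT X + pT Y ≤ pT (X ∩ Y) + pT (X ∪ Y))
    (m : α → ℤ) (γ : ℤ)
    (hγS : ∑ v ∈ S, m v = γ) (hγT : ∑ v ∈ T, m v = γ)
    (hstar : StarCond S T F₀ rS pT m γ) :
    ∀ X Y : Finset α, X ⊆ S ∪ T → Y ⊆ S ∪ T → ¬ X ⊆ Y → ¬ Y ⊆ X →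
      (X ∩ Y ∩ T).Nonempty → (S \ (X ∪ Y)).Nonempty →
      0 < p₁ S T F₀ rS pT m X → 0 < p₁ S T F₀ rS pT m Y →
      p₁ S T F₀ rS pT m X + p₁ S T F₀ rS pT m Y ≤
        p₁ S T F₀ rS pT m (X ∩ Y) + p₁ S T F₀ rS pT m (X ∪ Y) := by
  intro X Y hX hY hXY hYX hneT hneS hpX hpY
  have hXV : ¬ ∃ s ∈ S, X = Vs S T F₀ s :=
    not_Vs_form hST hF₀ hXY hYX hneS hpY
  have hYV : ¬ ∃ s ∈ S, Y = Vs S T F₀ s :=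
    not_Vs_form hST hF₀ hYX hXY (by rwa [union_comm]) hpX
  rw [p₁, if_neg hXV] at hpX ⊢
  rw [p₁, if_neg hYV] at hpY ⊢
  have hmX := (p₀_pos_cond hpX).2
  have hmY := (p₀_pos_cond hpY).2
  calc p₀ S T F₀ rS pT m X + p₀ S T F₀ rS pT m Y
      ≤ p₀ S T F₀ rS pT m (X ∩ Y) + p₀ S T F₀ rS pT m (X ∪ Y) :=
        p0_supermod hrS hpT hX hY hmX hmY hneT hpX hpY
    _ ≤ p₁ S T F₀ rS pT m (X ∩ Y) + p₁ S T F₀ rS pT m (X ∪ Y) :=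
        add_le_add (p1_ge_p0 hST hF₀ hγS hstar _) (p1_ge_p0 hST hF₀ hγS hstar _)
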